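/- arXiv:1705.09424 — 4 statements merged into one kernel-verified Lean document; each statement's English description precedes it below -/
import Mathlib

section
/- Let G be a bipartite graph with n boundary vertices (all black) admitting an almost perfect matching, and let k = (number of interior white vertices) − (number of interior black vertices) be the excedance of G. Then for any perfect orientation of G arising from an almost perfect matching π (edges of π oriented white→black, all other edges black→white), the number of boundary vertices that are sinks of the orientation equals k, and the number of boundary vertices that are sources equals n − k. -/
/-!
STATEMENT 2: For a bipartite graph `G` with `n` boundary vertices (all black,
each incident to exactly one edge, its boundary edge), of excedance
`k = #interior white − #interior black`, the perfect orientation coming from an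
almost perfect matching `π` (matched edges white→black, unmatched black→white)
has exactly `k` boundary sinks and `n − k` boundary sources.
A boundary vertex `bnd i` is a sink iff its boundary edge is matched (directed
toward it), and a source iff its boundary edge is unmatched (directed away).
-/

open scoped Classical

theorem sinks_and_sources_of_perfect_orientation
    {V : Type*} [Fintype V] {n : ℕ}
    (white : V → Prop)
    (bnd : Fin n ↪ V)                 -- the boundary vertices
    (hb : ∀ i, ¬ white (bnd i))       -- boundary vertices are black
    (E : Finset (V × V))
    (hE : ∀ e ∈ E, white e.1 ∧ ¬ white e.2)
    -- each boundary vertex is incident to exactly one (boundary) edge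
    (hbdedge : ∀ i : Fin n, (E.filter (fun e => e.2 = bnd i)).card = 1)
    (π : Finset (V × V)) (hπE : π ⊆ E)
    (hint : ∀ v, (¬ ∃ i, v = bnd i) →
      (π.filter (fun e => e.1 = v ∨ e.2 = v)).card = 1)
    (hbd : ∀ v, (∃ i, v = bnd i) →
      (π.filter (fun e => e.1 = v ∨ e.2 = v)).card ≤ 1)
    (k : ℕ)
    -- `k` is the excedance: #interior white − #interior black
    (hk : (Finset.univ.filter (fun v => white v ∧ ¬ ∃ i, v = bnd i)).card
        = k + (Finset.univ.filter (fun v => ¬ white v ∧ ¬ ∃ i, v = bnd i)).card) :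
    -- sinks: boundary vertices whose boundary edge is matched
    (Finset.univ.filter (fun i : Fin n => ∃ e ∈ π, e.2 = bnd i)).card = k ∧
    -- sources: boundary vertices whose boundary edge is unmatched
    (Finset.univ.filter
        (fun i : Fin n => ∃ e ∈ E, e.2 = bnd i ∧ e ∉ π)).card = n - k := by
  -- white vertices are interior
  have hwi : ∀ v, white v → ¬ ∃ i, v = bnd i := by
    rintro v hv ⟨i, rfl⟩; exact hb i hv
  -- First count : |π| = #white vertices
  have h1 : π.card = ∑ v : V, (π.filter (fun e => e.1 = v)).card :=
    Finset.card_eq_sum_card_fiberwise (f := Prod.fst) (fun e _ => Finset.mem_univ _)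
  have hwhite1 : ∀ v, white v → (π.filter (fun e => e.1 = v)).card = 1 := by
    intro v hv
    have h := hint v (hwi v hv)
    rw [← h]
    apply congrArg
    apply Finset.filter_congr
    intro e he
    have hne : e.2 ≠ v := fun h' => (hE e (hπE he)).2 (h' ▸ hv)
    constructor
    · exact Or.inl
    · rintro (h' | h')
      · exact h'
      · exact absurd h' hne
  have hblack1 : ∀ v, ¬ white v → (π.filter (fun e => e.1 = v)).card = 0 := by
    intro v hv
    rw [Finset.card_eq_zero, Finset.filter_eq_empty_iff]
    intro e he h'
    exact hv (h' ▸ (hE e (hπE he)).1)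
  have hcount1 : π.card = (Finset.univ.filter (fun v => white v)).card := by
    rw [h1, ← Finset.sum_filter_add_sum_filter_not Finset.univ (fun v => white v)]
    rw [Finset.sum_congr rfl (fun v hv => hwhite1 v (Finset.mem_filter.mp hv).2),
      Finset.sum_congr rfl (fun v hv => hblack1 v (Finset.mem_filter.mp hv).2)]
    simp
  have hwset : (Finset.univ.filter (fun v => white v))
      = (Finset.univ.filter (fun v => white v ∧ ¬ ∃ i, v = bnd i)) := by
    apply Finset.filter_congr
    intro v _
    exact ⟨fun h => ⟨h, hwi v h⟩, fun h => h.1⟩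
  -- Second count : |π| = #interior black + #sinks
  have h2 : π.card = ∑ v : V, (π.filter (fun e => e.2 = v)).card :=
    Finset.card_eq_sum_card_fiberwise (f := Prod.snd) (fun e _ => Finset.mem_univ _)
  have hib1 : ∀ v, (¬ ∃ i, v = bnd i) → ¬ white v →
      (π.filter (fun e => e.2 = v)).card = 1 := by
    intro v hvi hvw
    have h := hint v hvi
    rw [← h]
    apply congrArg
    apply Finset.filter_congr
    intro e he
    have hne : e.1 ≠ v := fun h' => hvw (h' ▸ (hE e (hπE he)).1)
    constructor
    · exact Or.inr
    · rintro (h' | h')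
      · exact absurd h' hne
      · exact h'
  have hiw0 : ∀ v, white v → (π.filter (fun e => e.2 = v)).card = 0 := by
    intro v hv
    rw [Finset.card_eq_zero, Finset.filter_eq_empty_iff]
    intro e he h'
    exact (hE e (hπE he)).2 (h' ▸ hv)
  -- boundary terms
  have hbd1 : ∀ i : Fin n, (π.filter (fun e => e.2 = bnd i)).card
      = if (∃ e ∈ π, e.2 = bnd i) then 1 else 0 := by
    intro i
    by_cases hs : ∃ e ∈ π, e.2 = bnd i
    · rw [if_pos hs]
      have hle : (π.filter (fun e => e.2 = bnd i)).card ≤ 1 := by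
        refine le_trans (Finset.card_le_card ?_) (hbd (bnd i) ⟨i, rfl⟩)
        exact Finset.filter_subset_filter _ (by intro e; exact fun h => h) |>.trans
          (by apply Finset.monotone_filter_right; intro e _ h; exact Or.inr h)
      have hpos : 0 < (π.filter (fun e => e.2 = bnd i)).card := by
        obtain ⟨e, he, he2⟩ := hs
        exact Finset.card_pos.mpr ⟨e, Finset.mem_filter.mpr ⟨he, he2⟩⟩
      omega
    · rw [if_neg hs, Finset.card_eq_zero, Finset.filter_eq_empty_iff]
      intro e he h'
      exact hs ⟨e, he, h'⟩
  -- split the sum over V into boundary and interior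
  have hbdset : Finset.univ.filter (fun v => ∃ i, v = bnd i)
      = Finset.univ.image bnd := by
    ext v
    simp [eq_comm]
  have hsum2 : ∑ v : V, (π.filter (fun e => e.2 = v)).card
      = (Finset.univ.filter (fun i : Fin n => ∃ e ∈ π, e.2 = bnd i)).card
        + (Finset.univ.filter (fun v => ¬ white v ∧ ¬ ∃ i, v = bnd i)).card := by
    rw [← Finset.sum_filter_add_sum_filter_not Finset.univ (fun v => ∃ i, v = bnd i)]
    congr 1
    · rw [hbdset, Finset.sum_image (fun i _ j _ h => bnd.injective h)]
      rw [Finset.card_filter]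
      exact Finset.sum_congr rfl (fun i _ => hbd1 i)
    · rw [← Finset.sum_filter_add_sum_filter_not
        (Finset.univ.filter (fun v => ¬ ∃ i, v = bnd i)) (fun v => white v)]
      have hz : ∑ v ∈ ((Finset.univ.filter (fun v => ¬ ∃ i, v = bnd i)).filter
          (fun v => white v)), (π.filter (fun e => e.2 = v)).card = 0 := by
        apply Finset.sum_eq_zero
        intro v hv
        exact hiw0 v (Finset.mem_filter.mp hv).2
      rw [hz, zero_add]
      rw [Finset.sum_congr rfl (fun v hv => by
        have h1 := Finset.mem_filter.mp hv
        have h2 := Finset.mem_filter.mp h1.1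
        exact hib1 v h2.2 h1.2)]
      rw [Finset.sum_const, smul_eq_mul, mul_one]
      congr 1
      rw [Finset.filter_filter]
      apply Finset.filter_congr
      intro v _
      tauto
  -- conclude sink count
  have hsinks : (Finset.univ.filter (fun i : Fin n => ∃ e ∈ π, e.2 = bnd i)).card = k := by
    have e1 : π.card = k + (Finset.univ.filter
        (fun v => ¬ white v ∧ ¬ ∃ i, v = bnd i)).card := by
      rw [hcount1, hwset, hk]
    have e2 := h2.trans hsum2
    omega
  refine ⟨hsinks, ?_⟩
  -- source predicate is the negation of sink predicate
  have hneg : (Finset.univ.filter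
        (fun i : Fin n => ∃ e ∈ E, e.2 = bnd i ∧ e ∉ π))
      = (Finset.univ.filter (fun i : Fin n => ¬ ∃ e ∈ π, e.2 = bnd i)) := by
    apply Finset.filter_congr
    intro i _
    obtain ⟨e₀, he₀⟩ := Finset.card_eq_one.mp (hbdedge i)
    have he₀E : e₀ ∈ E ∧ e₀.2 = bnd i := by
      have : e₀ ∈ E.filter (fun e => e.2 = bnd i) := he₀ ▸ Finset.mem_singleton_self e₀
      exact Finset.mem_filter.mp this
    have huniq : ∀ e ∈ E, e.2 = bnd i → e = e₀ := by
      intro e he h'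
      have : e ∈ E.filter (fun e => e.2 = bnd i) := Finset.mem_filter.mpr ⟨he, h'⟩
      rw [he₀] at this
      exact Finset.mem_singleton.mp this
    constructor
    · rintro ⟨e, heE, he2, henπ⟩ ⟨f, hfπ, hf2⟩
      have hfe : f = e₀ := huniq f (hπE hfπ) hf2
      have hee : e = e₀ := huniq e heE he2
      exact henπ (hee ▸ hfe ▸ hfπ)
    · intro hns
      refine ⟨e₀, he₀E.1, he₀E.2, fun h => hns ⟨e₀, h, he₀E.2⟩⟩
  rw [hneg]
  have := Finset.card_filter_add_card_filter_not
    (s := (Finset.univ : Finset (Fin n))) (p := fun i => ∃ e ∈ π, e.2 = bnd i)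
  rw [Finset.card_univ, Fintype.card_fin] at this
  omega
end

section
/- Let G be a bipartite graph with all boundary vertices black, and let W be an r-weblike subgraph of G, i.e., a spanning subgraph with each edge e labeled by a multiplicity m(e) ∈ {1,…,r} such that the multiplicities of edges around each interior vertex sum to r. Let ℓ be a consistent labeling of W: an assignment of a subset S(e) ⊆ [r] with |S(e)| = m(e) to every edge e of W, such that around each interior vertex the sets S(e) of incident edges are pairwise disjoint (hence their union is [r]). Then every color i ∈ [r] appears in the boundary edge labels with total multiplicity exactly k, where k is the excedance of G; i.e., the multiset union S(b_1) ∪ ⋯ ∪ S(b_n) over boundary edges equals {1^k, 2^k, …, r^k}. -/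
/-!
STATEMENT 7: in a consistent labeling of an `r`-weblike subgraph `W` of a
bipartite graph `G` (all boundary vertices black), each color `i ∈ [r]`
appears among the labels of the boundary edges with total multiplicity exactly
`k`, the excedance of `G`.  Equivalently the multiset union
`S(b₁) ∪ ⋯ ∪ S(bₙ)` equals `{1ᵏ, …, rᵏ}`.
-/

open scoped Classical

theorem consistent_labeling_boundary_multiset
    {V : Type*} [Fintype V] {n r : ℕ}
    (white : V → Prop)
    (bnd : Fin n ↪ V) (hb : ∀ i, ¬ white (bnd i))
    (E : Finset (V × V)) (hE : ∀ e ∈ E, white e.1 ∧ ¬ white e.2)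
    -- each boundary vertex is incident to at most one edge
    (hbd1 : ∀ i : Fin n, (E.filter (fun e => e.2 = bnd i)).card ≤ 1)
    -- `W` is an `r`-weblike subgraph of `G`, with multiplicities `m`
    (W : Finset (V × V)) (hWE : W ⊆ E)
    (m : V × V → ℕ)
    (hm : ∀ e ∈ W, 1 ≤ m e ∧ m e ≤ r)
    (hweb : ∀ v, (¬ ∃ i, v = bnd i) →
      (∑ e ∈ W.filter (fun e => e.1 = v ∨ e.2 = v), m e) = r)
    -- `S` is a consistent labeling of `W`
    (S : V × V → Finset (Fin r))
    (hScard : ∀ e ∈ W, (S e).card = m e)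
    (hSdisj : ∀ v, (¬ ∃ i, v = bnd i) →
      ∀ e ∈ W.filter (fun e => e.1 = v ∨ e.2 = v),
        ∀ e' ∈ W.filter (fun e' => e'.1 = v ∨ e'.2 = v),
          e ≠ e' → Disjoint (S e) (S e'))
    -- the excedance `k`
    (k : ℕ)
    (hk : (Finset.univ.filter (fun v => white v ∧ ¬ ∃ i, v = bnd i)).card
        = k + (Finset.univ.filter (fun v => ¬ white v ∧ ¬ ∃ i, v = bnd i)).card) :
    ∀ i : Fin r,
      (W.filter (fun e => (∃ j, e.2 = bnd j) ∧ i ∈ S e)).card = k := by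
  intro i
  have hW : ∀ e ∈ W, white e.1 ∧ ¬ white e.2 := fun e he => hE e (hWE he)
  -- at every interior vertex, exactly one (at least one) incident edge carries color i
  have key : ∀ v, (¬ ∃ j, v = bnd j) →
      ∃ e ∈ W.filter (fun e => e.1 = v ∨ e.2 = v), i ∈ S e := by
    intro v hv
    set F := W.filter (fun e => e.1 = v ∨ e.2 = v) with hF
    have hdisj : ∀ e ∈ F, ∀ e' ∈ F, e ≠ e' → Disjoint (S e) (S e') := hSdisj v hv
    have hcard : (F.biUnion S).card = r := by
      rw [Finset.card_biUnion hdisj]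
      calc ∑ e ∈ F, (S e).card = ∑ e ∈ F, m e := by
            refine Finset.sum_congr rfl fun e he => ?_
            exact hScard e (Finset.mem_filter.mp he).1
        _ = r := hweb v hv
    have huniv : F.biUnion S = Finset.univ :=
      Finset.eq_univ_of_card _ (by simpa using hcard)
    have hi : i ∈ F.biUnion S := by rw [huniv]; exact Finset.mem_univ i
    simpa using Finset.mem_biUnion.mp hi
  -- edges of W carrying color i
  set T := W.filter (fun e => i ∈ S e) with hT
  have hTmem : ∀ e, e ∈ T ↔ e ∈ W ∧ i ∈ S e := by
    intro e; simp [hT]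
  -- white endpoints of edges of W are interior
  have hwInt : ∀ e ∈ W, ¬ ∃ j, e.1 = bnd j := by
    rintro e he ⟨j, hj⟩
    exact hb j (hj ▸ (hW e he).1)
  -- card T = # interior white vertices
  have hTA : T.card =
      (Finset.univ.filter (fun v => white v ∧ ¬ ∃ j, v = bnd j)).card := by
    apply Finset.card_bij (fun e _ => e.1)
    · intro e he
      rw [hTmem] at he
      simp only [Finset.mem_filter, Finset.mem_univ, true_and]
      exact ⟨(hW e he.1).1, hwInt e he.1⟩
    · intro e he e' he' h
      rw [hTmem] at he he'
      by_contra hne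
      have hvInt := hwInt e he.1
      have h1 : e ∈ W.filter (fun x => x.1 = e.1 ∨ x.2 = e.1) := by
        simp [he.1]
      have h2 : e' ∈ W.filter (fun x => x.1 = e.1 ∨ x.2 = e.1) := by
        simp [he'.1, h.symm]
      have := hSdisj e.1 hvInt e h1 e' h2 hne
      exact (Finset.disjoint_left.mp this he.2) he'.2
    · intro v hv
      simp only [Finset.mem_filter, Finset.mem_univ, true_and] at hv
      obtain ⟨e, he, hie⟩ := key v hv.2
      simp only [Finset.mem_filter] at he
      have h1 : e.1 = v := by
        rcases he.2 with h | h
        · exact h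
        · exact absurd (h ▸ hv.1) (hW e he.1).2
      exact ⟨e, (hTmem e).mpr ⟨he.1, hie⟩, h1⟩
  -- edges of T with interior black endpoint = # interior black vertices
  have hTB : (T.filter (fun e => ¬ ∃ j, e.2 = bnd j)).card =
      (Finset.univ.filter (fun v => ¬ white v ∧ ¬ ∃ j, v = bnd j)).card := by
    apply Finset.card_bij (fun e _ => e.2)
    · intro e he
      simp only [Finset.mem_filter] at he
      rw [hTmem] at he
      simp only [Finset.mem_filter, Finset.mem_univ, true_and]
      exact ⟨(hW e he.1.1).2, he.2⟩
    · intro e he e' he' h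
      simp only [Finset.mem_filter] at he he'
      rw [hTmem] at he he'
      by_contra hne
      have h1 : e ∈ W.filter (fun x => x.1 = e.2 ∨ x.2 = e.2) := by
        simp [he.1.1]
      have h2 : e' ∈ W.filter (fun x => x.1 = e.2 ∨ x.2 = e.2) := by
        simp [he'.1.1, h.symm]
      have := hSdisj e.2 he.2 e h1 e' h2 hne
      exact (Finset.disjoint_left.mp this he.1.2) he'.1.2
    · intro v hv
      simp only [Finset.mem_filter, Finset.mem_univ, true_and] at hv
      obtain ⟨e, he, hie⟩ := key v hv.2
      simp only [Finset.mem_filter] at he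
      have h2 : e.2 = v := by
        rcases he.2 with h | h
        · exact absurd (h ▸ (hW e he.1).1) hv.1
        · exact h
      refine ⟨e, ?_, h2⟩
      simp only [Finset.mem_filter]
      exact ⟨(hTmem e).mpr ⟨he.1, hie⟩, h2 ▸ hv.2⟩
  -- the goal set is T filtered on boundary endpoint
  have hgoal : W.filter (fun e => (∃ j, e.2 = bnd j) ∧ i ∈ S e)
      = T.filter (fun e => ∃ j, e.2 = bnd j) := by
    rw [hT, Finset.filter_filter]
    ext e; simp; tauto
  have hsplit : (T.filter (fun e => ∃ j, e.2 = bnd j)).card +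
      (T.filter (fun e => ¬ ∃ j, e.2 = bnd j)).card = T.card :=
    Finset.card_filter_add_card_filter_not _
  rw [hgoal]
  omega
end

section
/- Let G be a bipartite graph with all boundary vertices black, let r ≥ 1, and let (I_1,…,I_r) be a list of k-subsets of the boundary vertex set. Then there is a bijection between: (i) r-tuples (π_1,…,π_r) of almost perfect matchings of G with ∂(π_i) = I_i for each i, and (ii) pairs (W, ℓ) where W is an r-weblike subgraph of G and ℓ is a consistent labeling of W whose boundary location subsets are (I_1,…,I_r) (i.e., for each i, the set of boundary vertices j whose boundary edge label contains color i is I_i). Under this bijection, the superposition of (π_1,…,π_r) gives W with m(e) = #{i : e ∈ π_i}. Consequently, for any edge weighting wt: E(G) → ℂ*, one has Δ_{I_1}(N)·Δ_{I_2}(N)···Δ_{I_r}(N) = Σ_W a((I_1,…,I_r); W)·Π_e wt(e)^{m(e)}, where the sum is over r-weblike subgraphs W of G and a((I_1,…,I_r);W) is the number of consistent labelings of W with boundary location subsets (I_1,…,I_r). -/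
open scoped Classical

noncomputable section

def IsAPM {V : Type*} [Fintype V] (E : Finset (V × V)) (interior : V → Prop)
    (π : Finset (V × V)) : Prop :=
  π ⊆ E ∧
    (∀ v, interior v → (π.filter (fun e => e.1 = v ∨ e.2 = v)).card = 1) ∧
    (∀ v, ¬ interior v → (π.filter (fun e => e.1 = v ∨ e.2 = v)).card ≤ 1)

def bdrySub {V : Type*} [Fintype V] {n : ℕ} (bnd : Fin n ↪ V)
    (π : Finset (V × V)) : Finset (Fin n) :=
  Finset.univ.filter (fun i => ∃ e ∈ π, e.2 = bnd i)

def Delta {V : Type*} [Fintype V] {n : ℕ} (E : Finset (V × V))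
    (interior : V → Prop) (bnd : Fin n ↪ V) (wt : V × V → ℂ)
    (I : Finset (Fin n)) : ℂ :=
  ∑ π ∈ E.powerset.filter (fun π => IsAPM E interior π ∧ bdrySub bnd π = I),
    ∏ e ∈ π, wt e

/-- `ℓ` is a consistent labeling of an `r`-weblike subgraph of `(V,E)` with
boundary location subsets `I`.  The weblike subgraph is the support of `ℓ`,
with multiplicities `m e = (ℓ e).card`. -/
def IsConsistentLabeling {V : Type*} [Fintype V] {n r : ℕ}
    (E : Finset (V × V)) (interior : V → Prop) (bnd : Fin n ↪ V)
    (I : Fin r → Finset (Fin n)) (ℓ : V × V → Finset (Fin r)) : Prop :=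
  (∀ e, e ∉ E → ℓ e = ∅) ∧
  (∀ v, interior v →
    (∀ e ∈ E.filter (fun e => e.1 = v ∨ e.2 = v),
      ∀ e' ∈ E.filter (fun e' => e'.1 = v ∨ e'.2 = v),
        e ≠ e' → Disjoint (ℓ e) (ℓ e')) ∧
    (∑ e ∈ E.filter (fun e => e.1 = v ∨ e.2 = v), (ℓ e).card) = r) ∧
  (∀ i : Fin r,
    I i = Finset.univ.filter (fun j => ∃ e ∈ E, e.2 = bnd j ∧ i ∈ ℓ e))

section Aux

variable {V : Type*} [Fintype V] {n r : ℕ}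

omit [Fintype V] in
lemma filter_incident_eq (E : Finset (V × V)) (π : Finset (V × V)) (hπ : π ⊆ E) (v : V) :
    (E.filter (fun e => e.1 = v ∨ e.2 = v)).filter (fun e => e ∈ π)
      = π.filter (fun e => e.1 = v ∨ e.2 = v) := by
  ext e
  simp only [Finset.mem_filter]
  constructor
  · rintro ⟨⟨_, h⟩, h2⟩; exact ⟨h2, h⟩
  · rintro ⟨h1, h2⟩; exact ⟨⟨hπ h1, h2⟩, h1⟩

lemma forward_consistent {white : V → Prop} {bnd : Fin n ↪ V}
    {E : Finset (V × V)}
    (hE : ∀ e ∈ E, white e.1 ∧ ¬ white e.2)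
    {I : Fin r → Finset (Fin n)} {f : Fin r → Finset (V × V)}
    (hf : ∀ i, IsAPM E (fun v => ¬ ∃ j, v = bnd j) (f i) ∧ bdrySub bnd (f i) = I i) :
    IsConsistentLabeling E (fun v => ¬ ∃ j, v = bnd j) bnd I
      (fun e => Finset.univ.filter (fun i => e ∈ f i)) := by
  refine ⟨?_, ?_, ?_⟩
  · intro e he
    rw [Finset.filter_eq_empty_iff]
    intro i _
    exact fun h => he ((hf i).1.1 h)
  · intro v hv
    constructor
    · intro e he e' he' hne
      rw [Finset.disjoint_left]
      intro i hi hi'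
      simp only [Finset.mem_filter, Finset.mem_univ, true_and] at hi hi'
      have h1 := (hf i).1.2.1 v hv
      rw [Finset.card_eq_one] at h1
      obtain ⟨a, ha⟩ := h1
      simp only [Finset.mem_filter] at he he'
      have hea : e ∈ (f i).filter (fun e => e.1 = v ∨ e.2 = v) :=
        Finset.mem_filter.mpr ⟨hi, he.2⟩
      have hea' : e' ∈ (f i).filter (fun e => e.1 = v ∨ e.2 = v) :=
        Finset.mem_filter.mpr ⟨hi', he'.2⟩
      rw [ha, Finset.mem_singleton] at hea hea'
      exact hne (hea.trans hea'.symm)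
    · have key : ∀ i : Fin r,
          (E.filter (fun e => e.1 = v ∨ e.2 = v)).filter (fun e => e ∈ f i)
            = (f i).filter (fun e => e.1 = v ∨ e.2 = v) :=
        fun i => filter_incident_eq E (f i) (hf i).1.1 v
      calc ∑ e ∈ E.filter (fun e => e.1 = v ∨ e.2 = v),
            (Finset.univ.filter (fun i => e ∈ f i)).card
          = ∑ e ∈ E.filter (fun e => e.1 = v ∨ e.2 = v),
              ∑ i : Fin r, if e ∈ f i then 1 else 0 := by
            refine Finset.sum_congr rfl fun e _ => ?_
            rw [Finset.card_filter]
        _ = ∑ i : Fin r, ∑ e ∈ E.filter (fun e => e.1 = v ∨ e.2 = v),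
              if e ∈ f i then 1 else 0 := Finset.sum_comm
        _ = ∑ i : Fin r,
              ((E.filter (fun e => e.1 = v ∨ e.2 = v)).filter (fun e => e ∈ f i)).card := by
            refine Finset.sum_congr rfl fun i _ => ?_
            rw [Finset.card_filter]
        _ = ∑ _i : Fin r, 1 := by
            refine Finset.sum_congr rfl fun i _ => ?_
            rw [key i]
            exact (hf i).1.2.1 v hv
        _ = r := by simp
  · intro i
    rw [← (hf i).2]
    unfold bdrySub
    ext j
    simp only [Finset.mem_filter, Finset.mem_univ, true_and]
    constructor
    · rintro ⟨e, he, h2⟩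
      exact ⟨e, (hf i).1.1 he, h2, he⟩
    · rintro ⟨e, heE, h2, hi⟩
      exact ⟨e, hi, h2⟩

lemma backward_apm {white : V → Prop} {bnd : Fin n ↪ V}
    (hb : ∀ i, ¬ white (bnd i)) {E : Finset (V × V)}
    (hE : ∀ e ∈ E, white e.1 ∧ ¬ white e.2)
    (hbd1 : ∀ i : Fin n, (E.filter (fun e => e.2 = bnd i)).card ≤ 1)
    {I : Fin r → Finset (Fin n)} {ℓ : V × V → Finset (Fin r)}
    (hℓ : IsConsistentLabeling E (fun v => ¬ ∃ j, v = bnd j) bnd I ℓ) (i : Fin r) :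
    IsAPM E (fun v => ¬ ∃ j, v = bnd j) (Finset.univ.filter (fun e => i ∈ ℓ e)) ∧
      bdrySub bnd (Finset.univ.filter (fun e => i ∈ ℓ e)) = I i := by
  have hmemE : ∀ e : V × V, i ∈ ℓ e → e ∈ E := by
    intro e he
    by_contra hne
    rw [hℓ.1 e hne] at he
    simp at he
  constructor
  · refine ⟨?_, ?_, ?_⟩
    · intro e he
      simp only [Finset.mem_filter, Finset.mem_univ, true_and] at he
      exact hmemE e he
    · intro v hv
      obtain ⟨hdisj, hsum⟩ := hℓ.2.1 v hv
      have hsub : (Finset.univ.filter (fun e => i ∈ ℓ e)).filter (fun e => e.1 = v ∨ e.2 = v)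
          = (E.filter (fun e => e.1 = v ∨ e.2 = v)).filter (fun e => i ∈ ℓ e) := by
        ext e
        simp only [Finset.mem_filter, Finset.mem_univ, true_and]
        constructor
        · rintro ⟨h1, h2⟩; exact ⟨⟨hmemE e h1, h2⟩, h1⟩
        · rintro ⟨⟨_, h2⟩, h1⟩; exact ⟨h1, h2⟩
      rw [hsub]
      have hbu : (E.filter (fun e => e.1 = v ∨ e.2 = v)).biUnion ℓ = Finset.univ := by
        apply Finset.eq_univ_of_card
        rw [Finset.card_biUnion hdisj, hsum, Fintype.card_fin]
      obtain ⟨e₀, he₀F, he₀⟩ : ∃ e ∈ E.filter (fun e => e.1 = v ∨ e.2 = v), i ∈ ℓ e := by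
        have : i ∈ (E.filter (fun e => e.1 = v ∨ e.2 = v)).biUnion ℓ :=
          hbu ▸ Finset.mem_univ i
        simpa using this
      rw [Finset.card_eq_one]
      refine ⟨e₀, ?_⟩
      ext e
      rw [Finset.mem_filter, Finset.mem_singleton]
      constructor
      · rintro ⟨heF, he⟩
        by_contra hne
        exact Finset.disjoint_left.mp (hdisj e heF e₀ he₀F hne) he he₀
      · rintro rfl; exact ⟨he₀F, he₀⟩
    · intro v hv
      rw [not_not] at hv
      obtain ⟨j, rfl⟩ := hv
      have hsub : (Finset.univ.filter (fun e => i ∈ ℓ e)).filter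
            (fun e => e.1 = bnd j ∨ e.2 = bnd j)
          ⊆ E.filter (fun e => e.2 = bnd j) := by
        intro e he
        simp only [Finset.mem_filter, Finset.mem_univ, true_and] at he ⊢
        obtain ⟨h1, h2⟩ := he
        have heE : e ∈ E := hmemE e h1
        refine ⟨heE, ?_⟩
        rcases h2 with h2 | h2
        · exact absurd (h2 ▸ (hE e heE).1) (hb j)
        · exact h2
      exact le_trans (Finset.card_le_card hsub) (hbd1 j)
  · rw [hℓ.2.2 i]
    unfold bdrySub
    ext j
    simp only [Finset.mem_filter, Finset.mem_univ, true_and]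
    constructor
    · rintro ⟨e, he, h2⟩
      exact ⟨e, hmemE e he, h2, he⟩
    · rintro ⟨e, heE, h2, hi⟩
      exact ⟨e, hi, h2⟩

end Aux

theorem superposition_bijection_and_product_formula
    {V : Type*} [Fintype V] {n r k : ℕ}
    (white : V → Prop)
    (bnd : Fin n ↪ V) (hb : ∀ i, ¬ white (bnd i))
    (E : Finset (V × V)) (hE : ∀ e ∈ E, white e.1 ∧ ¬ white e.2)
    (hbd1 : ∀ i : Fin n, (E.filter (fun e => e.2 = bnd i)).card ≤ 1)
    (wt : V × V → ℂ) (hwt : ∀ e ∈ E, wt e ≠ 0)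
    (I : Fin r → Finset (Fin n)) (hI : ∀ i, (I i).card = k) :
    -- (i) ↔ (ii): the superposition bijection
    (∃ Φ : {f : Fin r → Finset (V × V) //
              ∀ i, IsAPM E (fun v => ¬ ∃ j, v = bnd j) (f i) ∧
                bdrySub bnd (f i) = I i} ≃
           {ℓ : V × V → Finset (Fin r) //
              IsConsistentLabeling E (fun v => ¬ ∃ j, v = bnd j) bnd I ℓ},
      ∀ f e, (Φ f).1 e = Finset.univ.filter (fun i => e ∈ f.1 i)) ∧
    -- consequently, the product of boundary measurements is the weighted count
    -- of consistently labeled weblike subgraphs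
    (∏ i : Fin r, Delta E (fun v => ¬ ∃ j, v = bnd j) bnd wt (I i))
      = ∑ ℓ : V × V → Finset (Fin r),
          if IsConsistentLabeling E (fun v => ¬ ∃ j, v = bnd j) bnd I ℓ then
            ∏ e ∈ E, wt e ^ (ℓ e).card
          else 0 := by
  have hLF : ∀ f : Fin r → Finset (V × V),
      (fun i => Finset.univ.filter (fun e =>
        i ∈ Finset.univ.filter (fun i' => e ∈ f i'))) = f := by
    intro f; funext i; ext e; simp
  have hFL : ∀ ℓ : V × V → Finset (Fin r),
      (fun e => Finset.univ.filter (fun i =>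
        e ∈ Finset.univ.filter (fun e' => i ∈ ℓ e'))) = ℓ := by
    intro ℓ; funext e; ext i; simp
  constructor
  · refine ⟨⟨fun f => ⟨fun e => Finset.univ.filter (fun i => e ∈ f.1 i),
        forward_consistent hE f.2⟩,
      fun ℓ => ⟨fun i => Finset.univ.filter (fun e => i ∈ ℓ.1 e),
        fun i => backward_apm hb hE hbd1 ℓ.2 i⟩, ?_, ?_⟩, fun f e => rfl⟩
    · intro f; exact Subtype.ext (hLF f.1)
    · intro ℓ; exact Subtype.ext (hFL ℓ.1)
  · unfold Delta
    rw [Finset.prod_univ_sum]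
    have hR : (∑ ℓ : V × V → Finset (Fin r),
        if IsConsistentLabeling E (fun v => ¬ ∃ j, v = bnd j) bnd I ℓ then
          ∏ e ∈ E, wt e ^ (ℓ e).card else 0)
        = ∑ ℓ ∈ Finset.univ.filter
            (fun ℓ => IsConsistentLabeling E (fun v => ¬ ∃ j, v = bnd j) bnd I ℓ),
            ∏ e ∈ E, wt e ^ (ℓ e).card := by
      rw [Finset.sum_filter]
    rw [hR]
    refine Finset.sum_nbij' (i := fun f e => Finset.univ.filter (fun i => e ∈ f i))
      (j := fun ℓ i => Finset.univ.filter (fun e => i ∈ ℓ e)) ?_ ?_ ?_ ?_ ?_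
    · intro f hf
      rw [Fintype.mem_piFinset] at hf
      simp only [Finset.mem_filter, Finset.mem_univ, true_and]
      refine forward_consistent hE fun i => ?_
      have := (Finset.mem_filter.mp (hf i)).2
      exact this
    · intro ℓ hℓ
      simp only [Finset.mem_filter, Finset.mem_univ, true_and] at hℓ
      rw [Fintype.mem_piFinset]
      intro i
      have h := backward_apm hb hE hbd1 hℓ i
      exact Finset.mem_filter.mpr ⟨Finset.mem_powerset.mpr h.1.1, h⟩
    · intro f _; exact hLF f
    · intro ℓ _; exact hFL ℓ
    · intro f hf
      rw [Fintype.mem_piFinset] at hf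
      have hsub : ∀ i, f i ⊆ E := fun i =>
        Finset.mem_powerset.mp (Finset.mem_filter.mp (hf i)).1
      calc ∏ i, ∏ e ∈ f i, wt e
          = ∏ i, ∏ e ∈ E, (if e ∈ f i then wt e else 1) := by
            refine Finset.prod_congr rfl fun i _ => ?_
            rw [← Finset.prod_filter]
            congr 1
            ext e
            simp only [Finset.mem_filter]
            exact ⟨fun h => ⟨hsub i h, h⟩, fun h => h.2⟩
        _ = ∏ e ∈ E, ∏ i, (if e ∈ f i then wt e else 1) := Finset.prod_comm
        _ = ∏ e ∈ E, wt e ^ (Finset.univ.filter (fun i => e ∈ f i)).card := by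
            refine Finset.prod_congr rfl fun e _ => ?_
            rw [← Finset.prod_filter, Finset.prod_const]

end
end

section
/- Let λ be a partition of n, M_λ the ℂ-vector space with basis the tabloids of shape λ (right ℂ[S_n]-module by permuting entries), and S_λ ⊆ M_λ the Specht module spanned by the polytabloids poly(T) = Σ_{σ ∈ col(T)} sign(σ)[T·σ]. Then S_λ ⊗ ε ≅ S_{λᵗ} as S_n-representations, where ε is the sign representation and λᵗ is the conjugate partition. -/
/-!
STATEMENT 14: `S_λ ⊗ ε ≅ S_{λᵗ}` as `S_n`-representations.

A partition `λ ⊢ n` is encoded by its row-length function `l : ℕ → ℕ`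
(antitone, supported on `[0,n)`, with total sum `n`).  A tableau of shape `l`
is a bijection `Fin n ≃ Cell l` from the numbers to the cells of the diagram.
The tabloid `[T]` of a tableau `T` is its row word `rowWord T : Fin n → ℕ`
(which cell row each number occupies); the permutation module `M_λ` is the free
module on row words, realized inside the free module `(Fin n → ℕ) →₀ ℂ` on
which `S_n` acts (on the right) by `[T]·σ = [T∘σ]`, i.e.
`single t ↦ single (t ∘ σ)`.  The Specht module `S_λ` is the span of the
polytabloids `poly T = Σ_{σ ∈ col T} sign σ · [T·σ]`.  The conjugate partition
is `λᵗ(j) = #{i : j < l i}`.  The theorem asserts: both Specht modules are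
stable under the action, and there is a linear isomorphism
`e : S_λ ≃ S_{λᵗ}` satisfying `e(x·σ) = sign σ · (e x)·σ`, i.e. an isomorphism
`S_λ ⊗ ε ≅ S_{λᵗ}` of `S_n`-representations.
-/

open Finset

noncomputable section

/-- The cells of the Young diagram with row lengths `l`. -/
def Cell (l : ℕ → ℕ) : Type := {c : ℕ × ℕ // c.2 < l c.1}

/-- Tableaux of shape `l`: bijective fillings of the diagram by `1,…,n`. -/
abbrev Tableau (n : ℕ) (l : ℕ → ℕ) : Type := Fin n ≃ Cell l

/-- The row word (tabloid) of a tableau. -/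
def rowWord {n : ℕ} {l : ℕ → ℕ} (T : Tableau n l) : Fin n → ℕ :=
  fun a => (T a).1.1

/-- The column group of a tableau: permutations preserving all columns. -/
def colSet {n : ℕ} {l : ℕ → ℕ} (T : Tableau n l) :
    Finset (Equiv.Perm (Fin n)) :=
  Finset.univ.filter (fun σ => ∀ a, (T (σ a)).1.2 = (T a).1.2)

/-- The polytabloid of a tableau. -/
def polytabloid {n : ℕ} {l : ℕ → ℕ} (T : Tableau n l) : (Fin n → ℕ) →₀ ℂ :=
  ∑ σ ∈ colSet T,
    (Equiv.Perm.sign σ : ℤ) •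
      Finsupp.single (rowWord ((σ : Fin n ≃ Fin n).trans T)) (1 : ℂ)

/-- The Specht module of shape `l`, inside the free module on row words. -/
def Specht (n : ℕ) (l : ℕ → ℕ) : Submodule ℂ ((Fin n → ℕ) →₀ ℂ) :=
  Submodule.span ℂ (Set.range (polytabloid (n := n) (l := l)))

/-- The (right) action of `σ ∈ S_n` on the free module on row words:
`[T]·σ = [T∘σ]`. -/
def act {n : ℕ} (σ : Equiv.Perm (Fin n)) :
    ((Fin n → ℕ) →₀ ℂ) →ₗ[ℂ] ((Fin n → ℕ) →₀ ℂ) :=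
  Finsupp.lmapDomain ℂ ℂ (fun t : Fin n → ℕ => t ∘ σ)

/-- The conjugate (transposed) shape. -/
def conjShape (n : ℕ) (l : ℕ → ℕ) : ℕ → ℕ :=
  fun j => ((Finset.range n).filter (fun i => j < l i)).card

-- ============ auxiliary development ============
namespace SpechtAux

variable {n : ℕ} {l : ℕ → ℕ}

/-- sign as a complex scalar -/
def sgn (σ : Equiv.Perm (Fin n)) : ℂ := ((Equiv.Perm.sign σ : ℤ) : ℂ)

lemma sgn_eq_one_or (σ : Equiv.Perm (Fin n)) : sgn σ = 1 ∨ sgn σ = -1 := by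
  rcases Int.units_eq_one_or (Equiv.Perm.sign σ) with h | h <;> simp [sgn, h]

lemma sgn_one : sgn (1 : Equiv.Perm (Fin n)) = 1 := by simp [sgn]

lemma sgn_mul (σ τ : Equiv.Perm (Fin n)) : sgn (σ * τ) = sgn σ * sgn τ := by
  unfold sgn
  rw [map_mul]
  push_cast
  ring

lemma sgn_inv (σ : Equiv.Perm (Fin n)) : sgn σ⁻¹ = sgn σ := by
  simp [sgn]

lemma sgn_mul_self (σ : Equiv.Perm (Fin n)) : sgn σ * sgn σ = 1 := by
  rcases sgn_eq_one_or σ with h | h <;> simp [h]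

lemma conj_sgn (σ : Equiv.Perm (Fin n)) : (starRingEnd ℂ) (sgn σ) = sgn σ := by
  rcases sgn_eq_one_or σ with h | h <;> simp [h]

lemma zsmul_eq_sgn_smul (σ : Equiv.Perm (Fin n)) (x : (Fin n → ℕ) →₀ ℂ) :
    (Equiv.Perm.sign σ : ℤ) • x = sgn σ • x := by
  rw [sgn, Int.cast_smul_eq_zsmul]

/-- `act` on a single -/
lemma act_single (σ : Equiv.Perm (Fin n)) (t : Fin n → ℕ) (c : ℂ) :
    act σ (Finsupp.single t c) = Finsupp.single (t ∘ σ) c := by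
  simp [act, Finsupp.lmapDomain_apply, Finsupp.mapDomain_single]

lemma act_act (σ τ : Equiv.Perm (Fin n)) (x : (Fin n → ℕ) →₀ ℂ) :
    act σ (act τ x) = act (τ * σ) x := by
  simp only [act, Finsupp.lmapDomain_apply]
  rw [← Finsupp.mapDomain_comp]
  rfl

lemma act_one (x : (Fin n → ℕ) →₀ ℂ) : act (1 : Equiv.Perm (Fin n)) x = x := by
  simp only [act, Finsupp.lmapDomain_apply]
  have : (fun t : Fin n → ℕ => t ∘ (1 : Equiv.Perm (Fin n))) = id := by
    funext t; rfl
  rw [this, Finsupp.mapDomain_id]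

-- rowWord composition
lemma rowWord_trans (σ : Equiv.Perm (Fin n)) (T : Tableau n l) :
    rowWord ((σ : Fin n ≃ Fin n).trans T) = rowWord T ∘ σ := rfl

-- colSet membership
lemma mem_colSet {T : Tableau n l} {σ : Equiv.Perm (Fin n)} :
    σ ∈ colSet T ↔ ∀ a, (T (σ a)).1.2 = (T a).1.2 := by
  simp [colSet]

lemma one_mem_colSet (T : Tableau n l) : (1 : Equiv.Perm (Fin n)) ∈ colSet T := by
  simp [mem_colSet]

lemma mul_mem_colSet {T : Tableau n l} {σ τ : Equiv.Perm (Fin n)}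
    (hσ : σ ∈ colSet T) (hτ : τ ∈ colSet T) : σ * τ ∈ colSet T := by
  rw [mem_colSet] at *
  intro a
  simpa [Equiv.Perm.mul_apply] using (hσ (τ a)).trans (hτ a)

lemma inv_mem_colSet {T : Tableau n l} {σ : Equiv.Perm (Fin n)}
    (hσ : σ ∈ colSet T) : σ⁻¹ ∈ colSet T := by
  rw [mem_colSet] at *
  intro a
  have := hσ (σ⁻¹ a)
  simpa using this.symm

/-- polytabloid in terms of `sgn` and composition -/
lemma polytabloid_eq (T : Tableau n l) :
    polytabloid T = ∑ σ ∈ colSet T, sgn σ • Finsupp.single (rowWord T ∘ σ) (1 : ℂ) := by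
  unfold polytabloid
  refine Finset.sum_congr rfl fun σ _ => ?_
  rw [zsmul_eq_sgn_smul, rowWord_trans]

lemma colSet_trans (σ : Equiv.Perm (Fin n)) (T : Tableau n l) :
    colSet ((σ : Fin n ≃ Fin n).trans T) = (colSet T).image (fun τ => σ⁻¹ * τ * σ) := by
  ext τ
  simp only [mem_colSet, Finset.mem_image]
  constructor
  · intro h
    refine ⟨σ * τ * σ⁻¹, fun a => ?_, by group⟩
    have := h (σ⁻¹ a)
    simpa [Equiv.Perm.mul_apply] using this
  · rintro ⟨τ', hτ', rfl⟩
    intro a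
    simpa [Equiv.Perm.mul_apply] using hτ' (σ a)

lemma act_polytabloid (σ : Equiv.Perm (Fin n)) (T : Tableau n l) :
    act σ (polytabloid T) = polytabloid ((σ : Fin n ≃ Fin n).trans T) := by
  rw [polytabloid_eq, polytabloid_eq, map_sum]
  have hc := colSet_trans σ T
  rw [hc, Finset.sum_image (fun a _ b _ h => by
    have := mul_right_cancel h
    exact mul_left_cancel this)]
  refine Finset.sum_congr rfl fun τ hτ => ?_
  rw [map_smul, act_single]
  congr 1
  · rw [sgn_mul, sgn_mul, sgn_inv]
    have := sgn_mul_self σ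
    calc sgn τ = sgn τ * (sgn σ * sgn σ) := by rw [this, mul_one]
    _ = sgn σ * sgn τ * sgn σ := by ring
  · congr 1
    funext a
    simp [rowWord, Equiv.Perm.mul_apply]


lemma polytabloid_mem (T : Tableau n l) : polytabloid T ∈ Specht n l :=
  Submodule.subset_span ⟨T, rfl⟩

lemma exists_trans (T T' : Tableau n l) :
    ∃ σ : Equiv.Perm (Fin n), (σ : Fin n ≃ Fin n).trans T = T' := by
  refine ⟨T'.trans T.symm, ?_⟩
  ext a
  simp

lemma specht_stable (σ : Equiv.Perm (Fin n)) (x : (Fin n → ℕ) →₀ ℂ)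
    (hx : x ∈ Specht n l) : act σ x ∈ Specht n l := by
  induction hx using Submodule.span_induction with
  | mem x hx =>
      obtain ⟨T, rfl⟩ := hx
      rw [act_polytabloid]
      exact polytabloid_mem _
  | zero => simp
  | add x y _ _ hx hy => rw [map_add]; exact Submodule.add_mem _ hx hy
  | smul c x _ hx => rw [map_smul]; exact Submodule.smul_mem _ _ hx

lemma polytabloid_colmem {T : Tableau n l} {τ : Equiv.Perm (Fin n)}
    (hτ : τ ∈ colSet T) :
    act τ (polytabloid T) = sgn τ • polytabloid T := by
  rw [polytabloid_eq, map_sum, Finset.smul_sum]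
  refine Finset.sum_nbij' (fun σ => σ * τ) (fun σ => σ * τ⁻¹)
    (fun σ hσ => mul_mem_colSet hσ hτ)
    (fun σ hσ => mul_mem_colSet hσ (inv_mem_colSet hτ))
    (fun σ _ => by group) (fun σ _ => by group) (fun σ hσ => ?_)
  have hfun : (rowWord T ∘ ⇑σ) ∘ ⇑τ = rowWord T ∘ ⇑(σ * τ) := by
    funext a; simp [Equiv.Perm.mul_apply]
  have hc2 : sgn τ * sgn (σ * τ) = sgn σ := by
    rw [sgn_mul, mul_comm (sgn σ), ← mul_assoc, sgn_mul_self, one_mul]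
  rw [map_smul, act_single, hfun, smul_smul, hc2]

/-- the signed column sum operator -/
def bT (T : Tableau n l) : ((Fin n → ℕ) →₀ ℂ) →ₗ[ℂ] ((Fin n → ℕ) →₀ ℂ) :=
  ∑ σ ∈ colSet T, sgn σ • act σ

lemma bT_apply (T : Tableau n l) (x : (Fin n → ℕ) →₀ ℂ) :
    bT T x = ∑ σ ∈ colSet T, sgn σ • act σ x := by
  simp [bT, LinearMap.sum_apply]

lemma swap_mem_colSet {T : Tableau n l} {a b : Fin n}
    (hcol : (T a).1.2 = (T b).1.2) : Equiv.swap a b ∈ colSet T := by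
  rw [mem_colSet]
  intro x
  rcases eq_or_ne x a with rfl | hxa
  · rw [Equiv.swap_apply_left]; exact hcol.symm
  rcases eq_or_ne x b with rfl | hxb
  · rw [Equiv.swap_apply_right]; exact hcol
  · rw [Equiv.swap_apply_of_ne_of_ne hxa hxb]

lemma bT_single_of_collision {T : Tableau n l} {s : Fin n → ℕ} {a b : Fin n}
    (hab : a ≠ b) (hcol : (T a).1.2 = (T b).1.2) (hs : s a = s b) :
    bT T (Finsupp.single s 1) = 0 := by
  rw [bT_apply]
  have hsw : Equiv.swap a b ∈ colSet T := swap_mem_colSet hcol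
  have hst : s ∘ (Equiv.swap a b) = s := by
    funext x
    rcases eq_or_ne x a with rfl | hxa
    · simp [Equiv.swap_apply_left, hs.symm]
    rcases eq_or_ne x b with rfl | hxb
    · simp [Equiv.swap_apply_right, hs]
    · simp [Equiv.swap_apply_of_ne_of_ne hxa hxb]
  refine Finset.sum_involution (fun σ _ => Equiv.swap a b * σ) ?_ ?_ ?_ ?_
  · intro σ hσ
    rw [act_single, act_single]
    have h1 : s ∘ (Equiv.swap a b * σ) = s ∘ σ := by
      funext x
      have : (Equiv.swap a b * σ) x = Equiv.swap a b (σ x) := rfl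
      rw [Function.comp_apply, this, ← Function.comp_apply (f := s), hst]
      rfl
    rw [h1, sgn_mul]
    have hsg : sgn (n := n) (Equiv.swap a b) = -1 := by
      unfold sgn
      rw [Equiv.Perm.sign_swap hab]
      norm_num
    rw [hsg, neg_one_mul, neg_smul, add_neg_cancel]
  · intro σ _ _ h
    have h1 : Equiv.swap a b * σ = 1 * σ := by rw [one_mul]; exact h
    have h2 : Equiv.swap a b = 1 := mul_right_cancel h1
    have h3 : Equiv.swap a b a = (1 : Equiv.Perm (Fin n)) a := by rw [h2]
    rw [Equiv.swap_apply_left] at h3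
    exact hab (by simpa using h3.symm)
  · intro σ hσ
    exact mul_mem_colSet hsw hσ
  · intro σ _
    show Equiv.swap a b * (Equiv.swap a b * σ) = σ
    rw [← mul_assoc, Equiv.swap_mul_self, one_mul]

lemma bT_rowword {T : Tableau n l} {σ₀ : Equiv.Perm (Fin n)} (hσ₀ : σ₀ ∈ colSet T) :
    bT T (Finsupp.single (rowWord T ∘ σ₀) 1) = sgn σ₀ • polytabloid T := by
  rw [bT_apply, polytabloid_eq, Finset.smul_sum]
  refine Finset.sum_nbij' (fun σ => σ₀ * σ) (fun σ => σ₀⁻¹ * σ)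
    (fun σ hσ => mul_mem_colSet hσ₀ hσ)
    (fun σ hσ => mul_mem_colSet (inv_mem_colSet hσ₀) hσ)
    (fun σ _ => by group) (fun σ _ => by group) (fun σ hσ => ?_)
  have hfun : (rowWord T ∘ ⇑σ₀) ∘ ⇑σ = rowWord T ∘ ⇑(σ₀ * σ) := by
    funext a; simp [Equiv.Perm.mul_apply]
  have hc2 : sgn σ₀ * sgn (σ₀ * σ) = sgn σ := by
    rw [sgn_mul, ← mul_assoc, sgn_mul_self, one_mul]
  rw [act_single, hfun, smul_smul, hc2]


/-- a function `Fin n → ℕ` with row-fiber sizes given by `l` -/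
def isRowWord (l : ℕ → ℕ) (s : Fin n → ℕ) : Prop :=
  ∀ i, (Finset.univ.filter fun a => s a = i).card = l i

def rowModule (n : ℕ) (l : ℕ → ℕ) : Submodule ℂ ((Fin n → ℕ) →₀ ℂ) :=
  Submodule.span ℂ {x | ∃ s, isRowWord l s ∧ x = Finsupp.single s 1}

lemma isRowWord_rowWord (T : Tableau n l) : isRowWord l (rowWord T) := by
  intro i
  rw [← Finset.card_range (l i)]
  refine Finset.card_bij' (fun a _ => (T a).1.2) (fun b hb => T.symm ⟨(i, b), ?_⟩)
    ?_ ?_ ?_ ?_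
  · exact Finset.mem_range.mp hb
  · intro a ha
    rw [Finset.mem_filter] at ha
    rw [Finset.mem_range]
    have h2 := (T a).2
    rw [show (T a).1.1 = i from ha.2] at h2
    exact h2
  · intro b hb
    exact Finset.mem_filter.mpr ⟨Finset.mem_univ _,
      congrArg (fun c : Cell l => c.1.1) (T.apply_symm_apply _)⟩
  · intro a ha
    rw [Finset.mem_filter] at ha
    apply T.injective
    refine (T.apply_symm_apply _).trans ?_
    exact Subtype.ext (Prod.ext ha.2.symm rfl)
  · intro b hb
    exact congrArg (fun c : Cell l => c.1.2) (T.apply_symm_apply _)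

lemma card_row_lt (T : Tableau n l) (i m : ℕ) :
    (Finset.univ.filter fun a => (T a).1.2 < m ∧ (T a).1.1 = i).card
      = min (l i) m := by
  rw [← Finset.card_range (min (l i) m)]
  refine Finset.card_bij' (fun a _ => (T a).1.2) (fun b hb => T.symm ⟨(i, b), ?_⟩)
    ?_ ?_ ?_ ?_
  · exact lt_of_lt_of_le (Finset.mem_range.mp hb) (min_le_left _ _)
  · intro a ha
    rw [Finset.mem_filter] at ha
    rw [Finset.mem_range, lt_min_iff]
    refine ⟨?_, ha.2.1⟩
    have h2 := (T a).2
    rw [show (T a).1.1 = i from ha.2.2] at h2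
    exact h2
  · intro b hb
    rw [Finset.mem_range, lt_min_iff] at hb
    exact Finset.mem_filter.mpr ⟨Finset.mem_univ _,
      lt_of_eq_of_lt (congrArg (fun c : Cell l => c.1.2) (T.apply_symm_apply _)) hb.2,
      congrArg (fun c : Cell l => c.1.1) (T.apply_symm_apply _)⟩
  · intro a ha
    rw [Finset.mem_filter] at ha
    apply T.injective
    refine (T.apply_symm_apply _).trans ?_
    exact Subtype.ext (Prod.ext ha.2.2.symm rfl)
  · intro b hb
    exact congrArg (fun c : Cell l => c.1.2) (T.apply_symm_apply _)

lemma row_lt_n (hsupp : ∀ i, n ≤ i → l i = 0) (T : Tableau n l) (a : Fin n) :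
    (T a).1.1 < n := by
  by_contra h
  push_neg at h
  have := (T a).2
  rw [hsupp _ h] at this
  exact Nat.not_lt_zero _ this

lemma card_colband (hsupp : ∀ i, n ≤ i → l i = 0) (T : Tableau n l) (m : ℕ) :
    (Finset.univ.filter fun a => (T a).1.2 < m).card
      = ∑ i ∈ Finset.range n, min (l i) m := by
  rw [Finset.card_eq_sum_card_fiberwise
    (f := fun a => (T a).1.1) (t := Finset.range n)
    (fun a _ => Finset.mem_range.mpr (row_lt_n hsupp T a))]
  refine Finset.sum_congr rfl fun i _ => ?_
  rw [Finset.filter_filter]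
  exact card_row_lt T i m

lemma sval_lt (hsupp : ∀ i, n ≤ i → l i = 0) {s : Fin n → ℕ}
    (hs : isRowWord l s) (a : Fin n) : s a < n := by
  by_contra h
  push_neg at h
  have h0 := hs (s a)
  rw [hsupp _ h] at h0
  have : a ∈ Finset.univ.filter fun b => s b = s a := by simp
  rw [Finset.card_eq_zero.mp h0] at this
  exact absurd this (Finset.notMem_empty a)

lemma key_count (hsupp : ∀ i, n ≤ i → l i = 0) {s : Fin n → ℕ}
    (hs : isRowWord l s) (T : Tableau n l)
    (hinj : ∀ a b, (T a).1.2 = (T b).1.2 → s a = s b → a = b) (m : ℕ) :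
    ∀ v ∈ Finset.range n,
      (Finset.univ.filter fun a => (T a).1.2 < m ∧ s a = v).card = min (l v) m := by
  set D := Finset.univ.filter fun a : Fin n => (T a).1.2 < m with hD
  have h1 : D.card = ∑ v ∈ Finset.range n, (D.filter fun a => s a = v).card :=
    Finset.card_eq_sum_card_fiberwise
      (fun a _ => Finset.mem_range.mpr (sval_lt hsupp hs a))
  have h2 : ∀ v ∈ Finset.range n, (D.filter fun a => s a = v).card ≤ min (l v) m := by
    intro v _
    refine le_min ?_ ?_
    · rw [← hs v]
      refine Finset.card_le_card fun a ha => ?_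
      rw [hD, Finset.filter_filter, Finset.mem_filter] at ha
      rw [Finset.mem_filter]
      exact ⟨ha.1, ha.2.2⟩
    · rw [← Finset.card_range m]
      refine Finset.card_le_card_of_injOn (fun a => (T a).1.2) ?_ ?_
      · intro a ha
        rw [hD, Finset.filter_filter, Finset.mem_coe, Finset.mem_filter] at ha
        exact Finset.mem_range.mpr ha.2.1
      · intro a ha b hb hcol
        rw [Finset.coe_filter] at ha hb
        simp only [Set.mem_setOf_eq] at ha hb
        rw [hD, Finset.mem_filter] at ha hb
        exact hinj a b hcol (ha.2.trans hb.2.symm)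
  have h3 : ∑ v ∈ Finset.range n, (D.filter fun a => s a = v).card
      = ∑ v ∈ Finset.range n, min (l v) m := by
    rw [← h1, hD, card_colband hsupp T m]
  intro v hv
  have := (Finset.sum_eq_sum_iff_of_le h2).mp h3 v hv
  rw [← this, hD, Finset.filter_filter]

lemma exists_unique_colmate (hsupp : ∀ i, n ≤ i → l i = 0) {s : Fin n → ℕ}
    (hs : isRowWord l s) (T : Tableau n l)
    (hinj : ∀ a b, (T a).1.2 = (T b).1.2 → s a = s b → a = b) (a₀ : Fin n) :
    ∃! b, (T b).1.2 = (T a₀).1.2 ∧ s b = (T a₀).1.1 := by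
  set i₀ := (T a₀).1.1 with hi₀
  set j₀ := (T a₀).1.2 with hj₀
  have hj₀l : j₀ < l i₀ := (T a₀).2
  have hi₀n : i₀ < n := row_lt_n hsupp T a₀
  have hcard := key_count hsupp hs T hinj (j₀ + 1) i₀ (Finset.mem_range.mpr hi₀n)
  rw [min_eq_right hj₀l] at hcard
  set F := Finset.univ.filter fun a => (T a).1.2 < j₀ + 1 ∧ s a = i₀ with hF
  have hsurj := Finset.surj_on_of_inj_on_of_card_le (s := F) (t := Finset.range (j₀ + 1))
    (fun a _ => (T a).1.2)
    (fun a ha => by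
      rw [hF, Finset.mem_filter] at ha
      exact Finset.mem_range.mpr ha.2.1)
    (fun a b ha hb hcol => by
      rw [hF, Finset.mem_filter] at ha hb
      exact hinj a b hcol (ha.2.2.trans hb.2.2.symm))
    (by rw [Finset.card_range, hcard])
  obtain ⟨b, hbF, hbj⟩ := hsurj j₀ (Finset.mem_range.mpr (Nat.lt_succ_self _))
  have hbj' : j₀ = (T b).1.2 := hbj
  have hbF' := hbF
  rw [hF, Finset.mem_filter] at hbF'
  refine ⟨b, ⟨hbj'.symm, hbF'.2.2⟩, ?_⟩
  intro c hc
  refine hinj c b ?_ ?_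
  · exact hc.1.trans hbj'
  · rw [hc.2, hbF'.2.2]

lemma exists_colword (hsupp : ∀ i, n ≤ i → l i = 0) {s : Fin n → ℕ}
    (hs : isRowWord l s) (T : Tableau n l)
    (hinj : ∀ a b, (T a).1.2 = (T b).1.2 → s a = s b → a = b) :
    ∃ σ ∈ colSet T, rowWord T ∘ ⇑σ = s := by
  have H := fun a => exists_unique_colmate hsupp hs T hinj a
  choose f hf1 hf2 using fun a => (H a).exists
  have hinjf : Function.Injective f := by
    intro a a' h
    apply T.injective
    apply Subtype.ext
    apply Prod.ext
    · have h1 := hf2 a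
      have h2 := hf2 a'
      rw [h] at h1
      exact h1.symm.trans h2
    · have h1 := hf1 a
      have h2 := hf1 a'
      rw [h] at h1
      exact h1.symm.trans h2
  have hbijf : Function.Bijective f := (Finite.injective_iff_bijective).mp hinjf
  set σh : Equiv.Perm (Fin n) := Equiv.ofBijective f hbijf with hσh
  have hmem : σh ∈ colSet T := by
    rw [mem_colSet]
    intro a
    exact hf1 a
  refine ⟨σh⁻¹, inv_mem_colSet hmem, ?_⟩
  funext a
  have h2 := hf2 (σh⁻¹ a)
  have h3 : f (σh⁻¹ a) = a := by
    show σh (σh⁻¹ a) = a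
    simp
  rw [h3] at h2
  exact (h2.symm : rowWord T (σh⁻¹ a) = s a) ▸ rfl

lemma specht_le_rowModule : Specht n l ≤ rowModule n l := by
  rw [Specht, Submodule.span_le]
  rintro x ⟨T, rfl⟩
  rw [polytabloid_eq]
  refine Submodule.sum_mem _ fun σ hσ => Submodule.smul_mem _ _ ?_
  refine Submodule.subset_span ⟨rowWord T ∘ ⇑σ, ?_, rfl⟩
  rw [← rowWord_trans]
  exact isRowWord_rowWord _

lemma bT_key (hsupp : ∀ i, n ≤ i → l i = 0) (T : Tableau n l)
    {x : (Fin n → ℕ) →₀ ℂ} (hx : x ∈ rowModule n l) :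
    ∃ c : ℂ, bT T x = c • polytabloid T := by
  induction hx using Submodule.span_induction with
  | mem x hx =>
      obtain ⟨s, hs, rfl⟩ := hx
      by_cases hcol : ∃ a b, a ≠ b ∧ (T a).1.2 = (T b).1.2 ∧ s a = s b
      · obtain ⟨a, b, hab, h1, h2⟩ := hcol
        exact ⟨0, by rw [bT_single_of_collision hab h1 h2, zero_smul]⟩
      · push_neg at hcol
        have hinj : ∀ a b, (T a).1.2 = (T b).1.2 → s a = s b → a = b := by
          intro a b h1 h2
          by_contra hne
          exact hcol a b hne h1 h2
        obtain ⟨σ, hσ, hrw⟩ := exists_colword hsupp hs T hinj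
        exact ⟨sgn σ, by rw [← hrw, bT_rowword hσ]⟩
  | zero => exact ⟨0, by simp⟩
  | add x y _ _ hx hy =>
      obtain ⟨c1, hc1⟩ := hx
      obtain ⟨c2, hc2⟩ := hy
      exact ⟨c1 + c2, by rw [map_add, hc1, hc2, add_smul]⟩
  | smul c x _ hx =>
      obtain ⟨c1, hc1⟩ := hx
      exact ⟨c * c1, by rw [map_smul, hc1, smul_smul]⟩


/-- Hermitian inner product on the free module, basis orthonormal -/
def inn (x y : (Fin n → ℕ) →₀ ℂ) : ℂ :=
  Finsupp.sum x fun t c => (starRingEnd ℂ) c * y t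

lemma inn_zero_right (x : (Fin n → ℕ) →₀ ℂ) : inn x 0 = 0 := by
  simp [inn]

lemma inn_add_right (x y z : (Fin n → ℕ) →₀ ℂ) :
    inn x (y + z) = inn x y + inn x z := by
  unfold inn
  rw [← Finsupp.sum_add]
  congr 1
  funext t c
  simp [mul_add]

lemma inn_smul_right (c : ℂ) (x y : (Fin n → ℕ) →₀ ℂ) :
    inn x (c • y) = c * inn x y := by
  unfold inn
  rw [Finsupp.mul_sum]
  congr 1
  funext t c'
  simp
  ring

lemma inn_add_left (x y z : (Fin n → ℕ) →₀ ℂ) :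
    inn (x + y) z = inn x z + inn y z := by
  unfold inn
  refine Finsupp.sum_add_index' (fun t => by simp) (fun t c c' => by
    rw [map_add, add_mul])

lemma inn_smul_left (c : ℂ) (x y : (Fin n → ℕ) →₀ ℂ) :
    inn (c • x) y = (starRingEnd ℂ) c * inn x y := by
  unfold inn
  rw [Finsupp.sum_smul_index (fun t => by simp), Finsupp.mul_sum]
  congr 1
  funext t c'
  rw [map_mul]
  ring

lemma inn_sum_left {ι : Type*} (s : Finset ι) (f : ι → (Fin n → ℕ) →₀ ℂ)
    (y : (Fin n → ℕ) →₀ ℂ) :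
    inn (∑ i ∈ s, f i) y = ∑ i ∈ s, inn (f i) y := by
  classical
  induction s using Finset.induction with
  | empty => simp [inn]
  | insert _ _ h ih =>
      rw [Finset.sum_insert h, Finset.sum_insert h, inn_add_left, ih]

lemma inn_sum_right {ι : Type*} (x : (Fin n → ℕ) →₀ ℂ) (s : Finset ι)
    (f : ι → (Fin n → ℕ) →₀ ℂ) :
    inn x (∑ i ∈ s, f i) = ∑ i ∈ s, inn x (f i) := by
  classical
  induction s using Finset.induction with
  | empty => simp [inn_zero_right]
  | insert _ _ h ih =>
      rw [Finset.sum_insert h, Finset.sum_insert h, inn_add_right, ih]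

lemma comp_right_injective (σ : Equiv.Perm (Fin n)) :
    Function.Injective (fun t : Fin n → ℕ => t ∘ ⇑σ) := by
  intro t t' h
  funext a
  have := congrFun h (σ⁻¹ a)
  simpa using this

lemma act_apply_def (σ : Equiv.Perm (Fin n)) (x : (Fin n → ℕ) →₀ ℂ) :
    act σ x = Finsupp.mapDomain (fun t => t ∘ ⇑σ) x :=
  Finsupp.lmapDomain_apply _ _ _ _

lemma act_coeff (σ : Equiv.Perm (Fin n)) (y : (Fin n → ℕ) →₀ ℂ) (t : Fin n → ℕ) :
    (act σ y) t = y (t ∘ ⇑σ⁻¹) := by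
  have h1 : (t ∘ ⇑σ⁻¹) ∘ ⇑σ = t := by
    funext a; simp
  rw [act_apply_def]
  conv_lhs => rw [← h1]
  exact Finsupp.mapDomain_apply (comp_right_injective σ) y _

lemma inn_act (σ : Equiv.Perm (Fin n)) (x y : (Fin n → ℕ) →₀ ℂ) :
    inn (act σ⁻¹ x) y = inn x (act σ y) := by
  unfold inn
  rw [act_apply_def, Finsupp.sum_mapDomain_index_inj (comp_right_injective σ⁻¹)]
  congr 1
  funext t c
  rw [act_coeff]

lemma inn_single_one (t : Fin n → ℕ) (y : (Fin n → ℕ) →₀ ℂ) :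
    inn (Finsupp.single t 1) y = y t := by
  unfold inn
  rw [Finsupp.sum_single_index] <;> simp

lemma inn_self_eq_zero {x : (Fin n → ℕ) →₀ ℂ} (h : inn x x = 0) : x = 0 := by
  have h1 : inn x x = ((∑ t ∈ x.support, Complex.normSq (x t) : ℝ) : ℂ) := by
    unfold inn Finsupp.sum
    push_cast
    refine Finset.sum_congr rfl fun t _ => ?_
    rw [mul_comm, Complex.mul_conj]
  rw [h1, Complex.ofReal_eq_zero] at h
  have h2 : ∀ t ∈ x.support, Complex.normSq (x t) = 0 := by
    intro t ht
    exact (Finset.sum_eq_zero_iff_of_nonneg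
      (fun t _ => Complex.normSq_nonneg _)).mp h t ht
  ext t
  by_cases ht : t ∈ x.support
  · exact Complex.normSq_eq_zero.mp (h2 t ht)
  · exact Finsupp.notMem_support_iff.mp ht

lemma inn_eT (T : Tableau n l) (u : (Fin n → ℕ) →₀ ℂ) :
    inn u (polytabloid T) = inn (bT T u) (Finsupp.single (rowWord T) 1) := by
  rw [polytabloid_eq, inn_sum_right, bT_apply]
  have hL : ∀ σ ∈ colSet T,
      inn u (sgn σ • Finsupp.single (rowWord T ∘ ⇑σ) 1)
        = sgn σ * inn (act σ⁻¹ u) (Finsupp.single (rowWord T) 1) := by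
    intro σ hσ
    rw [inn_smul_right]
    congr 1
    have : Finsupp.single (rowWord T ∘ ⇑σ) (1 : ℂ)
        = act σ (Finsupp.single (rowWord T) 1) := by rw [act_single]
    rw [this, ← inn_act]
  rw [Finset.sum_congr rfl hL]
  -- RHS: expand inn over the sum defining bT
  have hR : inn (∑ σ ∈ colSet T, sgn σ • act σ u) (Finsupp.single (rowWord T) 1)
      = ∑ σ ∈ colSet T, sgn σ * inn (act σ u) (Finsupp.single (rowWord T) 1) := by
    rw [inn_sum_left]
    refine Finset.sum_congr rfl fun σ _ => ?_
    rw [inn_smul_left, conj_sgn]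
  rw [hR]
  refine Finset.sum_nbij' (fun σ => σ⁻¹) (fun σ => σ⁻¹)
    (fun σ hσ => inv_mem_colSet hσ) (fun σ hσ => inv_mem_colSet hσ)
    (fun σ _ => inv_inv σ) (fun σ _ => inv_inv σ) (fun σ hσ => ?_)
  rw [sgn_inv]

lemma irreducible (hsupp : ∀ i, n ≤ i → l i = 0) (p : Submodule ℂ ((Fin n → ℕ) →₀ ℂ))
    (hple : p ≤ Specht n l) (hstab : ∀ σ x, x ∈ p → act σ x ∈ p) :
    p = ⊥ ∨ p = Specht n l := by
  by_cases hbt : ∃ u ∈ p, ∃ T : Tableau n l, bT T u ≠ 0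
  · right
    obtain ⟨u, hu, T, hT⟩ := hbt
    have hrm : u ∈ rowModule n l := specht_le_rowModule (hple hu)
    obtain ⟨c, hc⟩ := bT_key hsupp T hrm
    have hc0 : c ≠ 0 := by
      rintro rfl
      rw [zero_smul] at hc
      exact hT hc
    have hbtp : bT T u ∈ p := by
      rw [bT_apply]
      exact Submodule.sum_mem _ fun σ _ => Submodule.smul_mem _ _ (hstab σ u hu)
    have heT : polytabloid T ∈ p := by
      have h2 : polytabloid T = c⁻¹ • bT T u := by
        rw [hc, smul_smul, inv_mul_cancel₀ hc0, one_smul]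
      rw [h2]
      exact Submodule.smul_mem _ _ hbtp
    refine le_antisymm hple ?_
    rw [Specht, Submodule.span_le]
    rintro x ⟨T', rfl⟩
    obtain ⟨σ, hσ⟩ := exists_trans T T'
    rw [← hσ, ← act_polytabloid]
    exact hstab σ _ heT
  · left
    push_neg at hbt
    rw [Submodule.eq_bot_iff]
    intro u hu
    have hperp : ∀ T : Tableau n l, inn u (polytabloid T) = 0 := by
      intro T
      rw [inn_eT, hbt u hu T]
      simp [inn]
    have hvan : ∀ v ∈ Specht n l, inn u v = 0 := by
      intro v hv
      induction hv using Submodule.span_induction with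
      | mem v hv => obtain ⟨T, rfl⟩ := hv; exact hperp T
      | zero => exact inn_zero_right u
      | add a b _ _ ha hb => rw [inn_add_right, ha, hb, add_zero]
      | smul c a _ ha => rw [inn_smul_right, ha, mul_zero]
    exact inn_self_eq_zero (hvan u (hple hu))


section Transpose

lemma lt_conj_of_cell (hmono : Antitone l) (hsupp : ∀ i, n ≤ i → l i = 0)
    {i j : ℕ} (h : j < l i) : i < conjShape n l j := by
  have hin : i < n := by
    by_contra hc
    push_neg at hc
    rw [hsupp _ hc] at h
    exact Nat.not_lt_zero _ h
  have hsub : Finset.range (i + 1) ⊆ (Finset.range n).filter fun i' => j < l i' := by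
    intro i' hi'
    rw [Finset.mem_range] at hi'
    rw [Finset.mem_filter, Finset.mem_range]
    have hi'i : i' ≤ i := Nat.lt_succ_iff.mp hi'
    exact ⟨lt_of_le_of_lt hi'i hin, lt_of_lt_of_le h (hmono hi'i)⟩
  have := Finset.card_le_card hsub
  rw [Finset.card_range] at this
  exact lt_of_lt_of_le (Nat.lt_succ_self i) this

lemma cell_of_lt_conj (hmono : Antitone l) {a b : ℕ}
    (h : b < conjShape n l a) : a < l b := by
  by_contra hc
  push_neg at hc
  have hsub : (Finset.range n).filter (fun i' => a < l i') ⊆ Finset.range b := by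
    intro i' hi'
    rw [Finset.mem_filter] at hi'
    rw [Finset.mem_range]
    by_contra hbi
    push_neg at hbi
    exact absurd (lt_of_lt_of_le hi'.2 (hmono hbi)) (not_lt.mpr hc)
  have := Finset.card_le_card hsub
  rw [Finset.card_range] at this
  exact absurd (lt_of_lt_of_le h this) (lt_irrefl b)

/-- transposition of cells -/
def tcell (hmono : Antitone l) (hsupp : ∀ i, n ≤ i → l i = 0) :
    Cell l ≃ Cell (conjShape n l) where
  toFun c := ⟨(c.1.2, c.1.1), lt_conj_of_cell hmono hsupp c.2⟩
  invFun c := ⟨(c.1.2, c.1.1), cell_of_lt_conj hmono c.2⟩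
  left_inv c := by apply Subtype.ext; rfl
  right_inv c := by apply Subtype.ext; rfl

variable (hmono : Antitone l) (hsupp : ∀ i, n ≤ i → l i = 0)

/-- transpose of a tableau -/
def transp (T : Tableau n l) : Tableau n (conjShape n l) :=
  T.trans (tcell hmono hsupp)

lemma rowWord_transp (T : Tableau n l) (a : Fin n) :
    rowWord (transp hmono hsupp T) a = (T a).1.2 := rfl

lemma transp_trans (σ : Equiv.Perm (Fin n)) (T : Tableau n l) :
    transp hmono hsupp ((σ : Fin n ≃ Fin n).trans T)
      = (σ : Fin n ≃ Fin n).trans (transp hmono hsupp T) := rfl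

lemma mem_colSet_transp {T : Tableau n l} {σ : Equiv.Perm (Fin n)} :
    σ ∈ colSet (transp hmono hsupp T) ↔ rowWord T ∘ ⇑σ = rowWord T := by
  rw [mem_colSet]
  constructor
  · intro h
    funext a
    exact h a
  · intro h a
    exact congrFun h a

/-- basis values of the twisted transpose map -/
def thetaVal (T₀ : Tableau n l) (s : Fin n → ℕ) : (Fin n → ℕ) →₀ ℂ :=
  letI := Classical.dec (∃ U : Tableau n l, rowWord U = s)
  if h : ∃ U : Tableau n l, rowWord U = s then
    sgn ((Classical.choose h).trans T₀.symm) •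
      polytabloid (transp hmono hsupp (Classical.choose h))
  else 0

lemma thetaVal_rowWord (T₀ U : Tableau n l) :
    thetaVal hmono hsupp T₀ (rowWord U)
      = sgn (U.trans T₀.symm) • polytabloid (transp hmono hsupp U) := by
  have h : ∃ V : Tableau n l, rowWord V = rowWord U := ⟨U, rfl⟩
  rw [thetaVal, dif_pos h]
  set V := Classical.choose h with hVdef
  have hV : rowWord V = rowWord U := Classical.choose_spec h
  set ρ : Equiv.Perm (Fin n) := V.trans U.symm with hρ
  have hVU : V = (ρ : Fin n ≃ Fin n).trans U := by
    ext a
    simp [hρ]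
  have hrw : rowWord U ∘ ⇑ρ = rowWord U := by
    have h6 : rowWord ((ρ : Fin n ≃ Fin n).trans U) = rowWord U := by
      rw [← hVU]; exact hV
    rw [rowWord_trans] at h6
    exact h6
  have hρc : ρ ∈ colSet (transp hmono hsupp U) :=
    (mem_colSet_transp hmono hsupp).mpr hrw
  have h1 : polytabloid (transp hmono hsupp V)
      = sgn ρ • polytabloid (transp hmono hsupp U) := by
    rw [hVU, transp_trans, ← act_polytabloid, polytabloid_colmem hρc]
  have h2 : sgn (V.trans T₀.symm) = sgn (U.trans T₀.symm) * sgn ρ := by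
    have : (V.trans T₀.symm : Equiv.Perm (Fin n)) = (U.trans T₀.symm) * ρ := by
      ext a
      simp [hρ, Equiv.Perm.mul_apply]
    rw [this, sgn_mul]
  rw [h1, h2, smul_smul, mul_assoc, sgn_mul_self, mul_one]

/-- the twisted transpose map on the ambient space -/
def theta (T₀ : Tableau n l) : ((Fin n → ℕ) →₀ ℂ) →ₗ[ℂ] ((Fin n → ℕ) →₀ ℂ) :=
  Finsupp.linearCombination ℂ (thetaVal hmono hsupp T₀)

lemma theta_single (T₀ : Tableau n l) (s : Fin n → ℕ) :
    theta hmono hsupp T₀ (Finsupp.single s 1) = thetaVal hmono hsupp T₀ s := by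
  rw [theta, Finsupp.linearCombination_single, one_smul]

lemma theta_polytabloid (T₀ T : Tableau n l) :
    theta hmono hsupp T₀ (polytabloid T)
      = sgn (T.trans T₀.symm) •
          ∑ σ ∈ colSet T, act σ (polytabloid (transp hmono hsupp T)) := by
  rw [polytabloid_eq, map_sum, Finset.smul_sum]
  refine Finset.sum_congr rfl fun σ hσ => ?_
  rw [map_smul, ← rowWord_trans, theta_single, thetaVal_rowWord]
  have h2 : sgn (((σ : Fin n ≃ Fin n).trans T).trans T₀.symm)
      = sgn (T.trans T₀.symm) * sgn σ := by
    have : (((σ : Fin n ≃ Fin n).trans T).trans T₀.symm : Equiv.Perm (Fin n))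
        = (T.trans T₀.symm) * σ := by
      ext a
      simp [Equiv.Perm.mul_apply]
    rw [this, sgn_mul]
  rw [transp_trans, ← act_polytabloid, h2, smul_smul]
  congr 1
  rcases sgn_eq_one_or σ with h | h <;> rw [h] <;> ring

lemma theta_mem (T₀ : Tableau n l) (x : (Fin n → ℕ) →₀ ℂ) (hx : x ∈ Specht n l) :
    theta hmono hsupp T₀ x ∈ Specht n (conjShape n l) := by
  induction hx using Submodule.span_induction with
  | mem x hx =>
      obtain ⟨T, rfl⟩ := hx
      rw [theta_polytabloid]
      refine Submodule.smul_mem _ _ (Submodule.sum_mem _ fun σ _ => ?_)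
      exact specht_stable σ _ (polytabloid_mem _)
  | zero => simp
  | add x y _ _ hx hy => rw [map_add]; exact Submodule.add_mem _ hx hy
  | smul c x _ hx => rw [map_smul]; exact Submodule.smul_mem _ _ hx

lemma theta_act (T₀ : Tableau n l) (g : Equiv.Perm (Fin n))
    (x : (Fin n → ℕ) →₀ ℂ) (hx : x ∈ Specht n l) :
    theta hmono hsupp T₀ (act g x) = sgn g • act g (theta hmono hsupp T₀ x) := by
  induction hx using Submodule.span_induction with
  | mem x hx =>
      obtain ⟨T, rfl⟩ := hx
      rw [act_polytabloid, theta_polytabloid, theta_polytabloid]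
      have h2 : sgn (((g : Fin n ≃ Fin n).trans T).trans T₀.symm)
          = sgn (T.trans T₀.symm) * sgn g := by
        have : (((g : Fin n ≃ Fin n).trans T).trans T₀.symm : Equiv.Perm (Fin n))
            = (T.trans T₀.symm) * g := by
          ext a
          simp [Equiv.Perm.mul_apply]
        rw [this, sgn_mul]
      rw [h2]
      have h3 : ∑ σ ∈ colSet ((g : Fin n ≃ Fin n).trans T),
            act σ (polytabloid (transp hmono hsupp ((g : Fin n ≃ Fin n).trans T)))
          = act g (∑ τ ∈ colSet T, act τ (polytabloid (transp hmono hsupp T))) := by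
        rw [colSet_trans, Finset.sum_image (fun a _ b _ h => by
          have := mul_right_cancel h
          exact mul_left_cancel this), map_sum]
        refine Finset.sum_congr rfl fun τ hτ => ?_
        rw [transp_trans, ← act_polytabloid, act_act, act_act]
        congr 1
        group
      rw [h3, map_smul, smul_smul, mul_comm]
  | zero => simp
  | add x y _ _ hx hy => rw [map_add, map_add, map_add, hx, hy, map_add, smul_add]
  | smul c x _ hx =>
      rw [map_smul, map_smul, hx, map_smul, map_smul, smul_comm]

lemma theta_polytabloid_ne_zero (T₀ : Tableau n l) :
    theta hmono hsupp T₀ (polytabloid T₀) ≠ 0 := by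
  set U := transp hmono hsupp T₀ with hU
  set w := rowWord U with hw
  have hval : (theta hmono hsupp T₀ (polytabloid T₀)) w = ((colSet T₀).card : ℂ) := by
    rw [theta_polytabloid]
    have h1 : (T₀.trans T₀.symm : Equiv.Perm (Fin n)) = 1 := by
      ext a
      simp
    rw [h1, sgn_one, one_smul, Finsupp.finset_sum_apply]
    have hterm : ∀ σ ∈ colSet T₀, (act σ (polytabloid U)) w = 1 := by
      intro σ hσ
      have hσr : rowWord U ∘ ⇑σ = rowWord U := by
        funext a
        exact (mem_colSet.mp hσ) a
      rw [polytabloid_eq, map_sum, Finsupp.finset_sum_apply]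
      have hterm2 : ∀ τ ∈ colSet U,
          (act σ (sgn τ • Finsupp.single (rowWord U ∘ ⇑τ) 1)) w
            = if τ = 1 then 1 else 0 := by
        intro τ hτ
        rw [map_smul, act_single, Finsupp.smul_apply, Finsupp.single_apply]
        by_cases hτ1 : τ = 1
        · subst hτ1
          have : (rowWord U ∘ ⇑(1 : Equiv.Perm (Fin n))) ∘ ⇑σ = w := by
            funext a
            exact congrFun hσr a
          rw [if_pos this, if_pos rfl, sgn_one]
          simp
        · have hne : ¬ ((rowWord U ∘ ⇑τ) ∘ ⇑σ = w) := by
            intro heq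
            apply hτ1
            have hrwτ : rowWord U ∘ ⇑τ = rowWord U := by
              funext a
              have e1 := congrFun heq (σ⁻¹ a)
              simp only [Function.comp_apply] at e1
              rw [show σ (σ⁻¹ a) = a from σ.apply_symm_apply a] at e1
              have e2 := congrFun hσr (σ⁻¹ a)
              simp only [Function.comp_apply] at e2
              rw [show σ (σ⁻¹ a) = a from σ.apply_symm_apply a] at e2
              exact e1.trans e2.symm
            -- τ preserves rows and columns of U, hence τ = 1
            apply Equiv.ext
            intro a
            rw [Equiv.Perm.one_apply]
            have hrow : (U (τ a)).1.1 = (U a).1.1 := congrFun hrwτ a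
            have hcol : (U (τ a)).1.2 = (U a).1.2 := (mem_colSet.mp hτ) a
            have : U (τ a) = U a := Subtype.ext (Prod.ext hrow hcol)
            exact U.injective this
          rw [if_neg hne, if_neg hτ1]
          simp
      rw [Finset.sum_congr rfl hterm2, Finset.sum_ite_eq' (colSet U) 1 (fun _ => (1:ℂ))]
      rw [if_pos (one_mem_colSet U)]
    rw [Finset.sum_congr rfl hterm, Finset.sum_const, nsmul_eq_mul, mul_one]
  intro hzero
  rw [hzero] at hval
  have hcard : (colSet T₀).card ≠ 0 := by
    intro hc
    have := Finset.card_eq_zero.mp hc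
    have h1 := one_mem_colSet T₀
    rw [this] at h1
    exact absurd h1 (Finset.notMem_empty _)
  simp only [Finsupp.coe_zero, Pi.zero_apply] at hval
  exact hcard (by exact_mod_cast hval.symm)

end Transpose

lemma exists_tableau (hsupp : ∀ i, n ≤ i → l i = 0)
    (hsum : ∑ i ∈ Finset.range n, l i = n) : Nonempty (Tableau n l) := by
  classical
  have e : Cell l ≃ (Σ i : Fin n, Fin (l i.1)) :=
    { toFun := fun c => ⟨⟨c.1.1, by
        by_contra h
        push_neg at h
        have h2 := c.2
        rw [hsupp _ h] at h2
        exact Nat.not_lt_zero _ h2⟩, ⟨c.1.2, c.2⟩⟩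
      invFun := fun p => ⟨(p.1.1, p.2.1), p.2.2⟩
      left_inv := fun c => by apply Subtype.ext; rfl
      right_inv := fun p => rfl }
  haveI : Fintype (Cell l) := Fintype.ofEquiv _ e.symm
  have hcard : Fintype.card (Cell l) = n := by
    rw [Fintype.card_congr e, Fintype.card_sigma]
    simp only [Fintype.card_fin]
    rw [Fin.sum_univ_eq_sum_range]
    exact hsum
  have h2 : Fintype.card (Fin n) = Fintype.card (Cell l) := by
    rw [hcard, Fintype.card_fin]
  exact Fintype.card_eq.mp h2

lemma conj_supp (hsum : ∑ i ∈ Finset.range n, l i = n) :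
    ∀ j, n ≤ j → conjShape n l j = 0 := by
  intro j hj
  rw [conjShape, Finset.card_eq_zero, Finset.filter_eq_empty_iff]
  intro i hi
  have hle : l i ≤ n := by
    rw [← hsum]
    exact Finset.single_le_sum (fun i _ => Nat.zero_le (l i)) hi
  omega

end SpechtAux

theorem specht_tensor_sign_iso_conj
    (n : ℕ) (l : ℕ → ℕ)
    (hmono : Antitone l) (hsupp : ∀ i, n ≤ i → l i = 0)
    (hsum : ∑ i ∈ Finset.range n, l i = n) :
    (∀ (σ : Equiv.Perm (Fin n)) (x : (Fin n → ℕ) →₀ ℂ),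
      x ∈ Specht n l → act σ x ∈ Specht n l) ∧
    (∀ (σ : Equiv.Perm (Fin n)) (x : (Fin n → ℕ) →₀ ℂ),
      x ∈ Specht n (conjShape n l) → act σ x ∈ Specht n (conjShape n l)) ∧
    ∃ e : (Specht n l) ≃ₗ[ℂ] (Specht n (conjShape n l)),
      ∀ (σ : Equiv.Perm (Fin n)) (x y : Specht n l),
        act σ (x : (Fin n → ℕ) →₀ ℂ) = (y : (Fin n → ℕ) →₀ ℂ) →
        ((e y : Specht n (conjShape n l)) : (Fin n → ℕ) →₀ ℂ)
          = (Equiv.Perm.sign σ : ℤ) •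
              act σ ((e x : Specht n (conjShape n l)) : (Fin n → ℕ) →₀ ℂ) := by

  classical
  obtain ⟨T₀⟩ := SpechtAux.exists_tableau hsupp hsum
  have hsuppc := SpechtAux.conj_supp (l := l) hsum
  refine ⟨fun σ x hx => SpechtAux.specht_stable σ x hx,
          fun σ x hx => SpechtAux.specht_stable σ x hx, ?_⟩
  set Θ := SpechtAux.theta hmono hsupp T₀ with hΘ
  have hmaps : ∀ x ∈ Specht n l, Θ x ∈ Specht n (conjShape n l) :=
    fun x hx => SpechtAux.theta_mem hmono hsupp T₀ x hx
  have hact : ∀ (g : Equiv.Perm (Fin n)) (x : (Fin n → ℕ) →₀ ℂ), x ∈ Specht n l →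
      Θ (act g x) = SpechtAux.sgn g • act g (Θ x) :=
    fun g x hx => SpechtAux.theta_act hmono hsupp T₀ g x hx
  have hne : Θ (polytabloid T₀) ≠ 0 :=
    SpechtAux.theta_polytabloid_ne_zero hmono hsupp T₀
  have hstabk : ∀ (σ : Equiv.Perm (Fin n)) (x : (Fin n → ℕ) →₀ ℂ),
      x ∈ Specht n l ⊓ LinearMap.ker Θ → act σ x ∈ Specht n l ⊓ LinearMap.ker Θ := by
    intro σ x hx
    obtain ⟨hx1, hx2⟩ := hx
    refine ⟨SpechtAux.specht_stable σ x hx1, LinearMap.mem_ker.mpr ?_⟩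
    rw [hact σ x hx1, LinearMap.mem_ker.mp hx2, map_zero, smul_zero]
  have hker : Specht n l ⊓ LinearMap.ker Θ = ⊥ := by
    rcases SpechtAux.irreducible hsupp _ inf_le_left hstabk with h | h
    · exact h
    · exfalso
      have hmem : polytabloid T₀ ∈ Specht n l ⊓ LinearMap.ker Θ := by
        rw [h]
        exact SpechtAux.polytabloid_mem T₀
      exact hne (LinearMap.mem_ker.mp hmem.2)
  have hrange : Submodule.map Θ (Specht n l) = Specht n (conjShape n l) := by
    have hle : Submodule.map Θ (Specht n l) ≤ Specht n (conjShape n l) := by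
      rintro y ⟨x, hx, rfl⟩
      exact hmaps x hx
    have hstabr : ∀ (σ : Equiv.Perm (Fin n)) (y : (Fin n → ℕ) →₀ ℂ),
        y ∈ Submodule.map Θ (Specht n l) → act σ y ∈ Submodule.map Θ (Specht n l) := by
      rintro σ y ⟨x, hx, rfl⟩
      have h1 : act σ (Θ x) = SpechtAux.sgn σ • Θ (act σ x) := by
        rw [hact σ x hx, smul_smul, SpechtAux.sgn_mul_self, one_smul]
      rw [h1]
      exact Submodule.smul_mem _ _ ⟨act σ x, SpechtAux.specht_stable σ x hx, rfl⟩
    rcases SpechtAux.irreducible hsuppc _ hle hstabr with h | h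
    · exfalso
      have hmem : Θ (polytabloid T₀) ∈ Submodule.map Θ (Specht n l) :=
        ⟨_, SpechtAux.polytabloid_mem T₀, rfl⟩
      rw [h] at hmem
      exact hne ((Submodule.mem_bot ℂ).mp hmem)
    · exact h
  let f : (Specht n l) →ₗ[ℂ] (Specht n (conjShape n l)) :=
    LinearMap.codRestrict _ (Θ.comp (Specht n l).subtype) (fun x => hmaps x.1 x.2)
  have hfval : ∀ z : Specht n l,
      ((f z : Specht n (conjShape n l)) : (Fin n → ℕ) →₀ ℂ) = Θ z.1 := fun z => rfl
  have hfker : LinearMap.ker f = ⊥ := by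
    rw [Submodule.eq_bot_iff]
    intro z hz
    have h2 : f z = 0 := LinearMap.mem_ker.mp hz
    have h1 : (z : (Fin n → ℕ) →₀ ℂ) ∈ Specht n l ⊓ LinearMap.ker Θ := by
      refine ⟨z.2, LinearMap.mem_ker.mpr ?_⟩
      rw [← hfval z, h2, ZeroMemClass.coe_zero]
    rw [hker] at h1
    exact Subtype.ext ((Submodule.mem_bot ℂ).mp h1)
  have hfinj : Function.Injective f := by
    rw [injective_iff_map_eq_zero]
    intro z hz
    have hzk : z ∈ LinearMap.ker f := LinearMap.mem_ker.mpr hz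
    rw [hfker] at hzk
    exact (Submodule.mem_bot ℂ).mp hzk
  have hfsurj : Function.Surjective f := by
    intro y
    have hy : (y : (Fin n → ℕ) →₀ ℂ) ∈ Submodule.map Θ (Specht n l) := by
      rw [hrange]
      exact y.2
    obtain ⟨x, hx, hxy⟩ := hy
    exact ⟨⟨x, hx⟩, Subtype.ext hxy⟩
  refine ⟨LinearEquiv.ofBijective f ⟨hfinj, hfsurj⟩, ?_⟩
  intro σ x y hxy
  have h1 : ∀ z : Specht n l,
      ((LinearEquiv.ofBijective f ⟨hfinj, hfsurj⟩ z : Specht n (conjShape n l))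
        : (Fin n → ℕ) →₀ ℂ) = Θ z.1 := fun z => rfl
  rw [h1, h1, SpechtAux.zsmul_eq_sgn_smul, ← hxy]
  exact hact σ x.1 x.2

end
end
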